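/- arXiv:1109.3343 — 3 statements merged into one kernel-verified Lean document; each statement's English description precedes it below -/
import Mathlib

section
/- Logarithmic majorization and uniform integrability: let (a_{n,k})_{1≤k≤n} and (b_{n,k})_{1≤k≤n} be two triangular arrays of positive real numbers, and set μ_n := (1/n)∑_{k=1}^n δ_{a_{n,k}} and ν_n := (1/n)∑_{k=1}^n δ_{b_{n,k}}. Assume that for all sufficiently large n: (i) a_{n,1} ≥ … ≥ a_{n,n} and b_{n,1} ≥ … ≥ b_{n,n}; (ii) ∏_{i=1}^k a_{n,i} ≤ ∏_{i=1}^k b_{n,i} for every 1 ≤ k ≤ n; (iii) ∏_{i=k}^n b_{n,i} ≤ ∏_{i=k}^n a_{n,i} for every 1 ≤ k ≤ n; and that (iv) ν_n converges weakly to some probability measure ν on ℝ₊, and (v) log is uniformly integrable for (ν_n)_{n≥1}. Then: (j) log is uniformly integrable for (μ_n)_{n≥1} (in particular (μ_n) is tight); (jj) ∫ log(t) dμ_n(t) = ∫ log(t) dν_n(t) for all sufficiently large n, and both converge to ∫ log(t) dν(t) as n → ∞; and every weak accumulation point μ of (μ_n) satisfies ∫ log(t) dμ(t) = ∫ log(t)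 dν(t). -/
open MeasureTheory Filter

section Aux
open Finset

/-- Truncation penalty function `(|x|-t)₊`. -/
noncomputable def phiT (t x : ℝ) : ℝ := max (|x| - t) 0

/-- A subgradient of `phiT t` -/
noncomputable def sgnT (t x : ℝ) : ℝ := if t < x then 1 else if x < -t then -1 else 0

lemma phiT_nonneg (t x : ℝ) : 0 ≤ phiT t x := le_max_right _ _

lemma phiT_le_abs {t : ℝ} (ht : 0 ≤ t) (x : ℝ) : phiT t x ≤ |x| := by
  unfold phiT
  rcases le_or_gt (|x| - t) 0 with h | h
  · rw [max_eq_right h]; exact abs_nonneg x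
  · rw [max_eq_left h.le]; linarith

lemma phiT_eq_zero {t x : ℝ} (h : |x| ≤ t) : phiT t x = 0 := by
  unfold phiT; rw [max_eq_right]; linarith

lemma abs_le_two_phiT {t x : ℝ} (h : 2 * t < |x|) : |x| ≤ 2 * phiT t x := by
  unfold phiT
  rw [max_eq_left (by nlinarith [abs_nonneg x])]
  nlinarith [abs_nonneg x]

lemma phiT_le_ite {t : ℝ} (ht : 0 ≤ t) (x : ℝ) :
    phiT t x ≤ if t < |x| then |x| else 0 := by
  split_ifs with h
  · exact phiT_le_abs ht x
  · rw [phiT_eq_zero (not_lt.1 h)]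

/-- subgradient inequality -/
lemma phiT_subgradient {t : ℝ} (ht : 0 ≤ t) (x y : ℝ) :
    phiT t x ≤ phiT t y + sgnT t x * (x - y) := by
  have h1 : y - t ≤ phiT t y := by
    unfold phiT
    rcases le_total (|y| - t) 0 with h | h
    · rw [max_eq_right h]; cases abs_cases y <;> linarith
    · rw [max_eq_left h]; cases abs_cases y <;> linarith
  have h2 : -y - t ≤ phiT t y := by
    unfold phiT
    rcases le_total (|y| - t) 0 with h | h
    · rw [max_eq_right h]; cases abs_cases y <;> linarith
    · rw [max_eq_left h]; cases abs_cases y <;> linarith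
  have h0 : 0 ≤ phiT t y := phiT_nonneg t y
  unfold sgnT
  split_ifs with hx hx'
  · have : phiT t x = x - t := by
      unfold phiT; rw [max_eq_left (by cases abs_cases x <;> linarith)]
      cases abs_cases x <;> linarith
    rw [this]; linarith
  · have : phiT t x = -x - t := by
      unfold phiT; rw [max_eq_left (by cases abs_cases x <;> linarith)]
      cases abs_cases x <;> linarith
    rw [this]; linarith
  · have : phiT t x = 0 := phiT_eq_zero (abs_le.2 ⟨by linarith, by linarith⟩)
    rw [this]; linarith

lemma sgnT_mono {t : ℝ} (ht : 0 ≤ t) {x y : ℝ} (h : x ≤ y) : sgnT t x ≤ sgnT t y := by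
  unfold sgnT
  split_ifs <;> linarith

/-- Abel summation: if partial sums of `g` are `≤ 0`, total is `0`, and `s` is
nonincreasing, then `∑ s i * g i ≤ 0`. -/
lemma abel_nonpos (n : ℕ) (s g : ℕ → ℝ)
    (hA : ∀ k, k ≤ n → ∑ i ∈ range k, g i ≤ 0)
    (hn : ∑ i ∈ range n, g i = 0)
    (hs : ∀ i j, i ≤ j → j < n → s j ≤ s i) :
    ∑ i ∈ range n, s i * g i ≤ 0 := by
  have := Finset.sum_range_by_parts s g n
  simp only [smul_eq_mul] at this
  rw [this, hn, mul_zero, zero_sub, neg_nonpos]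
  apply Finset.sum_nonneg
  intro i hi
  rw [Finset.mem_range] at hi
  have h1 : s (i + 1) ≤ s i := hs i (i+1) (Nat.le_succ i) (by omega)
  have h2 : ∑ j ∈ range (i+1), g j ≤ 0 := hA (i+1) (by omega)
  nlinarith

/-- HLP-type inequality for the convex function `phiT t`. -/
lemma hlp (n : ℕ) (t : ℝ) (ht : 0 ≤ t) (α β : ℕ → ℝ)
    (hmono : ∀ i j, i ≤ j → j < n → α j ≤ α i)
    (hpre : ∀ k, k ≤ n → ∑ i ∈ range k, α i ≤ ∑ i ∈ range k, β i)
    (htot : ∑ i ∈ range n, α i = ∑ i ∈ range n, β i) :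
    ∑ i ∈ range n, phiT t (α i) ≤ ∑ i ∈ range n, phiT t (β i) := by
  have key : ∑ i ∈ range n, sgnT t (α i) * (α i - β i) ≤ 0 := by
    apply abel_nonpos n _ (fun i => α i - β i)
    · intro k hk
      rw [Finset.sum_sub_distrib]
      linarith [hpre k hk]
    · rw [Finset.sum_sub_distrib]; linarith
    · intro i j hij hj
      exact sgnT_mono ht (hmono i j hij hj)
  calc ∑ i ∈ range n, phiT t (α i)
      ≤ ∑ i ∈ range n, (phiT t (β i) + sgnT t (α i) * (α i - β i)) :=
        Finset.sum_le_sum fun i _ => phiT_subgradient ht (α i) (β i)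
    _ = ∑ i ∈ range n, phiT t (β i) + ∑ i ∈ range n, sgnT t (α i) * (α i - β i) := by
        rw [Finset.sum_add_distrib]
    _ ≤ ∑ i ∈ range n, phiT t (β i) := by linarith

lemma fin_filter_sum (n k : ℕ) (hk : k ≤ n) (f : Fin n → ℝ) :
    ∑ i ∈ univ.filter (fun i : Fin n => (i : ℕ) < k), f i
      = ∑ j ∈ range k, (if h : j < n then f ⟨j, h⟩ else 0) := by
  rw [Finset.sum_filter]
  have h1 : ∀ i : Fin n, (if (i : ℕ) < k then f i else 0)
      = (fun j : ℕ => if j < k then (if h : j < n then f ⟨j, h⟩ else 0) else 0) (i : ℕ) := by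
    intro i; simp [i.isLt]
  rw [Finset.sum_congr rfl (fun i _ => h1 i),
    Fin.sum_univ_eq_sum_range (fun j => if j < k then (if h : j < n then f ⟨j, h⟩ else 0) else 0) n,
    ← Finset.sum_filter]
  congr 1
  ext j
  simp only [mem_filter, mem_range]
  omega

lemma fin_univ_sum (n : ℕ) (f : Fin n → ℝ) :
    ∑ i : Fin n, f i = ∑ j ∈ range n, (if h : j < n then f ⟨j, h⟩ else 0) := by
  rw [← fin_filter_sum n n le_rfl f]
  congr 1
  ext i
  simp [i.isLt]

lemma fin_filter_lt_univ (n k : ℕ) (hk : n ≤ k) :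
    univ.filter (fun i : Fin n => (i : ℕ) < k) = univ := by
  ext i; simp [lt_of_lt_of_le i.isLt hk]

lemma fin_filter_le_univ (n : ℕ) :
    univ.filter (fun i : Fin n => 0 ≤ (i : ℕ)) = univ := by
  ext i; simp

lemma phiT_continuous (t : ℝ) : Continuous (phiT t) := by
  unfold phiT; fun_prop

lemma abs_sub_le_phiT (t x : ℝ) : |x| - t ≤ phiT t x := le_max_left _ _

/-- truncated version of `log` as a function of `|x|`, continuous and bounded. -/
noncomputable def glog (t : ℝ) : ℝ → ℝ :=
  fun x => max (-t) (min t (Real.log (max |x| (Real.exp (-t)))))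

/-- truncated version of `(|log|x||-t)₊`, continuous and bounded. -/
noncomputable def pslog (t : ℝ) (M : ℕ) : ℝ → ℝ :=
  fun x => min (M : ℝ) (phiT t (Real.log (max |x| (Real.exp (-(t + M + 1))))))

lemma glog_continuous (t : ℝ) : Continuous (glog t) := by
  unfold glog
  have h : Continuous fun x : ℝ => Real.log (max |x| (Real.exp (-t))) := by
    apply Continuous.log (by fun_prop)
    intro x
    exact ne_of_gt (lt_of_lt_of_le (Real.exp_pos _) (le_max_right _ _))
  fun_prop

lemma glog_bound {t : ℝ} (ht : 0 ≤ t) (x : ℝ) : ‖glog t x‖ ≤ t := by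
  rw [Real.norm_eq_abs, abs_le]
  unfold glog
  constructor
  · exact le_max_left _ _
  · exact max_le (by linarith) (min_le_left _ _)

lemma pslog_continuous (t : ℝ) (M : ℕ) : Continuous (pslog t M) := by
  unfold pslog
  have h : Continuous fun x : ℝ => Real.log (max |x| (Real.exp (-(t + M + 1)))) := by
    apply Continuous.log (by fun_prop)
    intro x
    exact ne_of_gt (lt_of_lt_of_le (Real.exp_pos _) (le_max_right _ _))
  exact continuous_const.min ((phiT_continuous t).comp h)

lemma pslog_nonneg (t : ℝ) (M : ℕ) (x : ℝ) : 0 ≤ pslog t M x :=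
  le_min (Nat.cast_nonneg M) (phiT_nonneg _ _)

lemma pslog_bound (t : ℝ) (M : ℕ) (x : ℝ) : ‖pslog t M x‖ ≤ M := by
  rw [Real.norm_eq_abs, abs_le]
  exact ⟨by nlinarith [pslog_nonneg t M x, Nat.cast_nonneg (α := ℝ) M], min_le_left _ _⟩

lemma glog_diff {t : ℝ} (ht : 0 ≤ t) {x : ℝ} (hx : x ≠ 0) :
    |Real.log x - glog t x| ≤ phiT t (Real.log x) := by
  have hax : 0 < |x| := abs_pos.2 hx
  have hlog : Real.log |x| = Real.log x := Real.log_abs x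
  unfold glog phiT
  rcases le_or_gt (Real.exp (-t)) |x| with h | h
  · rw [max_eq_left h, hlog]
    have hu : -t ≤ Real.log x := by
      rw [← hlog, ← Real.log_exp (-t)]
      exact Real.log_le_log (Real.exp_pos _) h
    rcases le_or_gt (Real.log x) t with h2 | h2
    · rw [min_eq_right h2, max_eq_right hu]
      simpa using phiT_nonneg t (Real.log x)
    · rw [min_eq_left h2.le, max_eq_right (by linarith)]
      rw [abs_of_nonneg (by linarith), abs_of_nonneg (by linarith)]
      exact le_max_left _ _
  · have hu : Real.log x < -t := by
      rw [← hlog, ← Real.log_exp (-t)]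
      exact Real.log_lt_log hax h
    rw [max_eq_right h.le, Real.log_exp, min_eq_right (by linarith), max_self]
    rw [abs_of_nonpos (by linarith), abs_of_nonpos (by linarith)]
    refine le_trans (le_of_eq (by ring)) (le_max_left _ _)

lemma pslog_le_phiT {t : ℝ} (ht : 0 ≤ t) (M : ℕ) {x : ℝ} (hx : x ≠ 0) :
    pslog t M x ≤ phiT t (Real.log x) := by
  have hax : 0 < |x| := abs_pos.2 hx
  have hlog : Real.log |x| = Real.log x := Real.log_abs x
  unfold pslog
  rcases le_or_gt (Real.exp (-(t + M + 1))) |x| with h | h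
  · rw [max_eq_left h, hlog]
    exact min_le_right _ _
  · have hu : Real.log x < -(t + M + 1) := by
      rw [← hlog, ← Real.log_exp (-(t + M + 1))]
      exact Real.log_lt_log hax h
    rw [max_eq_right h.le, Real.log_exp]
    refine le_trans (min_le_left _ _) ?_
    unfold phiT
    have hM : (0:ℝ) ≤ M := Nat.cast_nonneg M
    rw [abs_of_nonpos (by linarith)]
    refine le_trans ?_ (le_max_left _ _)
    linarith
  
lemma pslog_tendsto {t : ℝ} (ht : 0 ≤ t) {x : ℝ} (hx : x ≠ 0) :
    Tendsto (fun M : ℕ => pslog t M x) atTop (nhds (phiT t (Real.log x))) := by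
  have hax : 0 < |x| := abs_pos.2 hx
  have hlog : Real.log |x| = Real.log x := Real.log_abs x
  have hev : ∀ᶠ M : ℕ in atTop, pslog t M x = phiT t (Real.log x) := by
    have h1 : ∀ᶠ M : ℕ in atTop, -(Real.log x) - t - 1 ≤ (M : ℝ) :=
      tendsto_natCast_atTop_atTop.eventually_ge_atTop _
    have h2 : ∀ᶠ M : ℕ in atTop, phiT t (Real.log x) ≤ (M : ℝ) :=
      tendsto_natCast_atTop_atTop.eventually_ge_atTop _
    filter_upwards [h1, h2] with M hM1 hM2
    unfold pslog
    have hexp : Real.exp (-(t + M + 1)) ≤ |x| := by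
      calc Real.exp (-(t + M + 1)) ≤ Real.exp (Real.log |x|) :=
            Real.exp_le_exp.2 (by rw [hlog]; linarith)
        _ = |x| := Real.exp_log hax
    rw [max_eq_left hexp, hlog, min_eq_right hM2]
  refine Tendsto.congr' ?_ (tendsto_const_nhds (x := phiT t (Real.log x)))
  filter_upwards [hev] with M hM
  exact hM.symm

lemma pslog_zero {t : ℝ} (ht : 0 ≤ t) (M : ℕ) : pslog t M 0 = M := by
  unfold pslog phiT
  rw [abs_zero, max_eq_right (Real.exp_pos _).le, Real.log_exp]
  rw [abs_of_nonpos (by linarith), max_eq_left (by linarith)]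
  rw [min_eq_left (by linarith)]

lemma lint_phiT_le (d : ℕ → ℕ) (c : (m : ℕ) → Fin (d m) → ℝ) (hc : ∀ m i, 0 < c m i)
    (ν : Measure ℝ) [IsProbabilityMeasure ν]
    (hW : ∀ f : BoundedContinuousFunction ℝ ℝ,
      Tendsto (fun m : ℕ => ((d m : ℝ))⁻¹ * ∑ i : Fin (d m), f (c m i)) atTop
        (nhds (∫ x, f x ∂ν)))
    {t ε : ℝ} (ht : 0 ≤ t) (hε : 0 ≤ ε)
    (h : ∀ m : ℕ, ((d m : ℝ))⁻¹ * ∑ i ∈ univ.filter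
      (fun i : Fin (d m) => t < |Real.log (c m i)|), |Real.log (c m i)| ≤ ε) :
    ν {0} = 0 ∧ ∫⁻ x, ENNReal.ofReal (phiT t (Real.log x)) ∂ν ≤ ENNReal.ofReal ε := by
  set ψ : ℕ → BoundedContinuousFunction ℝ ℝ := fun M =>
    BoundedContinuousFunction.ofNormedAddCommGroup (pslog t M) (pslog_continuous t M) M
      (pslog_bound t M) with hψ
  have hψcoe : ∀ M x, ψ M x = pslog t M x := fun M x => rfl
  have hint : ∀ M, ∫ x, ψ M x ∂ν ≤ ε := by
    intro M
    refine le_of_tendsto' (hW (ψ M)) (fun m => ?_)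
    calc ((d m : ℝ))⁻¹ * ∑ i : Fin (d m), ψ M (c m i)
        ≤ ((d m : ℝ))⁻¹ * ∑ i ∈ univ.filter
            (fun i : Fin (d m) => t < |Real.log (c m i)|), |Real.log (c m i)| := by
          apply mul_le_mul_of_nonneg_left _ (by positivity)
          rw [Finset.sum_filter]
          refine Finset.sum_le_sum fun i _ => ?_
          rw [hψcoe]
          exact le_trans (pslog_le_phiT ht M (hc m i).ne') (phiT_le_ite ht _)
      _ ≤ ε := h m
  have hlint : ∀ M, ∫⁻ x, ENNReal.ofReal (pslog t M x) ∂ν ≤ ENNReal.ofReal ε := by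
    intro M
    have := ofReal_integral_eq_lintegral_ofReal ((ψ M).integrable ν)
      (ae_of_all _ (pslog_nonneg t M))
    rw [show ⇑(ψ M) = pslog t M from rfl] at this
    rw [← this]
    exact ENNReal.ofReal_le_ofReal (hint M)
  have hmeas : ∀ M : ℕ, Measurable fun x => ENNReal.ofReal (pslog t M x) :=
    fun M => ENNReal.measurable_ofReal.comp (pslog_continuous t M).measurable
  have hfatou := lintegral_liminf_le (μ := ν) (u := atTop) hmeas
  have hlim : ∫⁻ x, (atTop.liminf fun M : ℕ => ENNReal.ofReal (pslog t M x)) ∂ν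
      ≤ ENNReal.ofReal ε := by
    refine le_trans hfatou (le_trans (liminf_le_liminf (Eventually.of_forall hlint)) ?_)
    simp [liminf_const]
  have hpt : ∀ x : ℝ, x ≠ 0 → (atTop.liminf fun M : ℕ => ENNReal.ofReal (pslog t M x))
      = ENNReal.ofReal (phiT t (Real.log x)) :=
    fun x hx => ((ENNReal.continuous_ofReal.tendsto _).comp (pslog_tendsto ht hx)).liminf_eq
  have hpt0 : (atTop.liminf fun M : ℕ => ENNReal.ofReal (pslog t M 0)) = ⊤ := by
    have : Tendsto (fun M : ℕ => ENNReal.ofReal (pslog t M 0)) atTop (nhds ⊤) := by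
      simp_rw [pslog_zero ht, ENNReal.ofReal_natCast]
      exact ENNReal.tendsto_nat_nhds_top
    exact this.liminf_eq
  have h0 : ν {0} = 0 := by
    by_contra h0
    have htop : (⊤ : ENNReal) ≤ ENNReal.ofReal ε := by
      calc (⊤ : ENNReal) = ⊤ * ν {0} := (ENNReal.top_mul h0).symm
        _ = ∫⁻ x in {(0:ℝ)},
            (atTop.liminf fun M : ℕ => ENNReal.ofReal (pslog t M x)) ∂ν := by
            rw [lintegral_singleton, hpt0]
        _ ≤ ∫⁻ x, (atTop.liminf fun M : ℕ => ENNReal.ofReal (pslog t M x)) ∂ν :=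
            setLIntegral_le_lintegral _ _
        _ ≤ ENNReal.ofReal ε := hlim
    exact absurd (lt_of_le_of_lt htop ENNReal.ofReal_lt_top) (lt_irrefl _)
  refine ⟨h0, le_trans (lintegral_mono fun x => ?_) hlim⟩
  by_cases hx : x = 0
  · subst hx; rw [hpt0]; exact le_top
  · exact le_of_eq (hpt x hx).symm

lemma row_key (n : ℕ) (av bv : Fin n → ℝ) (hapos : ∀ i, 0 < av i) (hbpos : ∀ i, 0 < bv i)
    (hmono : Antitone av)
    (hmaj : ∀ k : ℕ, ∏ i ∈ univ.filter (fun i : Fin n => (i : ℕ) < k), av i ≤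
        ∏ i ∈ univ.filter (fun i : Fin n => (i : ℕ) < k), bv i)
    (hmaj' : ∀ k : ℕ, ∏ i ∈ univ.filter (fun i : Fin n => k ≤ (i : ℕ)), bv i ≤
        ∏ i ∈ univ.filter (fun i : Fin n => k ≤ (i : ℕ)), av i)
    (t : ℝ) (ht : 0 ≤ t) :
    (∑ i : Fin n, phiT t (Real.log (av i)) ≤ ∑ i : Fin n, phiT t (Real.log (bv i))) ∧
      (∑ i : Fin n, Real.log (av i) = ∑ i : Fin n, Real.log (bv i)) := by
  -- total products are equal
  have htot_prod : ∏ i : Fin n, av i = ∏ i : Fin n, bv i := by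
    have h1 := hmaj n
    have h2 := hmaj' 0
    rw [fin_filter_lt_univ n n le_rfl] at h1
    rw [fin_filter_le_univ n] at h2
    exact le_antisymm h1 h2
  have hsum_eq : ∑ i : Fin n, Real.log (av i) = ∑ i : Fin n, Real.log (bv i) := by
    rw [← Real.log_prod (fun i _ => (hapos i).ne'),
      ← Real.log_prod (fun i _ => (hbpos i).ne'), htot_prod]
  refine ⟨?_, hsum_eq⟩
  set A : ℕ → ℝ := fun j => if h : j < n then Real.log (av ⟨j, h⟩) else 0 with hA
  set B : ℕ → ℝ := fun j => if h : j < n then Real.log (bv ⟨j, h⟩) else 0 with hB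
  have hAmono : ∀ i j, i ≤ j → j < n → A j ≤ A i := by
    intro i j hij hj
    have hi : i < n := lt_of_le_of_lt hij hj
    simp only [hA, dif_pos hj, dif_pos hi]
    exact Real.log_le_log (hapos _) (hmono (by exact Fin.mk_le_mk.2 hij))
  have hpre : ∀ k, k ≤ n → ∑ i ∈ range k, A i ≤ ∑ i ∈ range k, B i := by
    intro k hk
    have h1 := hmaj k
    have hA' := fin_filter_sum n k hk (fun i => Real.log (av i))
    have hB' := fin_filter_sum n k hk (fun i => Real.log (bv i))
    have hlogle : ∑ i ∈ univ.filter (fun i : Fin n => (i : ℕ) < k), Real.log (av i) ≤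
        ∑ i ∈ univ.filter (fun i : Fin n => (i : ℕ) < k), Real.log (bv i) := by
      rw [← Real.log_prod (fun i _ => (hapos i).ne'),
        ← Real.log_prod (fun i _ => (hbpos i).ne')]
      exact Real.log_le_log (Finset.prod_pos (fun i _ => hapos i)) h1
    rw [hA', hB'] at hlogle
    exact hlogle
  have htot : ∑ i ∈ range n, A i = ∑ i ∈ range n, B i := by
    rw [← fin_univ_sum n (fun i => Real.log (av i)), ← fin_univ_sum n (fun i => Real.log (bv i))]
    exact hsum_eq
  have := hlp n t ht A B hAmono hpre htot
  rw [fin_univ_sum n (fun i => phiT t (Real.log (av i))),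
    fin_univ_sum n (fun i => phiT t (Real.log (bv i)))]
  refine le_trans (le_of_eq ?_) (le_trans this (le_of_eq ?_)) <;>
  · apply Finset.sum_congr rfl
    intro j hj
    rw [Finset.mem_range] at hj
    simp [hA, hB, dif_pos hj]

/-- upgrade a UI family to one with nonnegative threshold -/
lemma ui_nonneg_thresh (c : (n : ℕ) → Fin n → ℝ)
    (h : ∀ ε : ℝ, 0 < ε → ∃ t : ℝ, ∀ n : ℕ,
      (n : ℝ)⁻¹ * ∑ i ∈ Finset.univ.filter
        (fun i : Fin n => t < |Real.log (c n i)|), |Real.log (c n i)| ≤ ε) :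
    ∀ ε : ℝ, 0 < ε → ∃ t : ℝ, 0 ≤ t ∧ ∀ n : ℕ,
      (n : ℝ)⁻¹ * ∑ i ∈ Finset.univ.filter
        (fun i : Fin n => t < |Real.log (c n i)|), |Real.log (c n i)| ≤ ε := by
  intro ε hε
  obtain ⟨t, ht⟩ := h ε hε
  refine ⟨max t 0, le_max_right _ _, fun n => ?_⟩
  refine le_trans (mul_le_mul_of_nonneg_left ?_ (by positivity)) (ht n)
  apply Finset.sum_le_sum_of_subset_of_nonneg
  · intro i hi
    simp only [Finset.mem_filter] at *
    exact ⟨hi.1, lt_of_le_of_lt (le_max_left _ _) hi.2⟩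
  · intro i _ _; exact abs_nonneg _

/-- Monotonicity of the filtered sum in the threshold. -/
lemma filtered_sum_mono (n : ℕ) (g : Fin n → ℝ) {t t' : ℝ} (h : t ≤ t') :
    ∑ i ∈ univ.filter (fun i : Fin n => t' < |g i|), |g i| ≤
      ∑ i ∈ univ.filter (fun i : Fin n => t < |g i|), |g i| := by
  apply Finset.sum_le_sum_of_subset_of_nonneg
  · intro i hi
    simp only [Finset.mem_filter] at *
    exact ⟨hi.1, lt_of_le_of_lt h hi.2⟩
  · intro i _ _; exact abs_nonneg _

lemma conclusion_one
    (a b : (n : ℕ) → Fin n → ℝ)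
    (ha_pos : ∀ n i, 0 < a n i) (hb_pos : ∀ n i, 0 < b n i)
    (h_mono : ∀ᶠ n in atTop, Antitone (a n) ∧ Antitone (b n))
    (h_maj : ∀ᶠ n in atTop, ∀ k : ℕ,
      ∏ i ∈ Finset.univ.filter (fun i : Fin n => (i : ℕ) < k), a n i ≤
        ∏ i ∈ Finset.univ.filter (fun i : Fin n => (i : ℕ) < k), b n i)
    (h_maj' : ∀ᶠ n in atTop, ∀ k : ℕ,
      ∏ i ∈ Finset.univ.filter (fun i : Fin n => k ≤ (i : ℕ)), b n i ≤
        ∏ i ∈ Finset.univ.filter (fun i : Fin n => k ≤ (i : ℕ)), a n i)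
    (h_ui : ∀ ε : ℝ, 0 < ε → ∃ t : ℝ, ∀ n : ℕ,
      (n : ℝ)⁻¹ * ∑ i ∈ Finset.univ.filter
        (fun i : Fin n => t < |Real.log (b n i)|), |Real.log (b n i)| ≤ ε) :
    ∀ ε : ℝ, 0 < ε → ∃ t : ℝ, ∀ n : ℕ,
      (n : ℝ)⁻¹ * ∑ i ∈ Finset.univ.filter
        (fun i : Fin n => t < |Real.log (a n i)|), |Real.log (a n i)| ≤ ε := by
  intro ε hε
  obtain ⟨t₀, ht₀, hb⟩ := ui_nonneg_thresh b h_ui (ε/2) (by linarith)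
  obtain ⟨N, hN⟩ := eventually_atTop.1 ((h_mono.and h_maj).and h_maj')
  set M : ℕ := (range N).sup (fun n => univ.sup (fun i : Fin n => ⌈|Real.log (a n i)|⌉₊)) with hM
  refine ⟨max (2 * t₀) M, fun n => ?_⟩
  rcases lt_or_ge n N with hn | hn
  · -- small n : the filter set is empty
    have hempty : univ.filter (fun i : Fin n => max (2 * t₀) M < |Real.log (a n i)|) = ∅ := by
      apply Finset.filter_false_of_mem
      intro i _
      push_neg
      refine le_trans ?_ (le_max_right _ _)
      calc |Real.log (a n i)| ≤ (⌈|Real.log (a n i)|⌉₊ : ℝ) := Nat.le_ceil _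
        _ ≤ (M : ℝ) := by
            apply Nat.cast_le.2
            refine le_trans (Finset.le_sup (f := fun i : Fin n => ⌈|Real.log (a n i)|⌉₊)
              (Finset.mem_univ i)) ?_
            exact Finset.le_sup (f := fun n => univ.sup fun i : Fin n => ⌈|Real.log (a n i)|⌉₊)
              (Finset.mem_range.2 hn)
    rw [hempty]
    simp [le_of_lt hε]
  · -- large n : use majorization
    obtain ⟨⟨hmono, hmaj⟩, hmaj'⟩ := hN n hn
    have hrow := row_key n (a n) (b n) (ha_pos n) (hb_pos n) hmono.1 hmaj hmaj' t₀ ht₀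
    have step1 : ∑ i ∈ univ.filter (fun i : Fin n => max (2 * t₀) M < |Real.log (a n i)|),
        |Real.log (a n i)| ≤
        ∑ i ∈ univ.filter (fun i : Fin n => 2 * t₀ < |Real.log (a n i)|), |Real.log (a n i)| :=
      filtered_sum_mono n _ (le_max_left _ _)
    have step2 : ∑ i ∈ univ.filter (fun i : Fin n => 2 * t₀ < |Real.log (a n i)|),
        |Real.log (a n i)| ≤ ∑ i : Fin n, 2 * phiT t₀ (Real.log (a n i)) := by
      refine le_trans (Finset.sum_le_sum ?_) (Finset.sum_le_sum_of_subset_of_nonneg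
        (Finset.filter_subset _ _) (fun i _ _ => mul_nonneg (by norm_num) (phiT_nonneg _ _)))
      intro i hi
      rw [Finset.mem_filter] at hi
      exact abs_le_two_phiT hi.2
    have step3 : ∑ i : Fin n, 2 * phiT t₀ (Real.log (a n i)) ≤
        ∑ i : Fin n, 2 * phiT t₀ (Real.log (b n i)) := by
      rw [← Finset.mul_sum, ← Finset.mul_sum]
      linarith [hrow.1]
    have step4 : ∑ i : Fin n, 2 * phiT t₀ (Real.log (b n i)) ≤
        2 * ∑ i ∈ univ.filter (fun i : Fin n => t₀ < |Real.log (b n i)|), |Real.log (b n i)| := by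
      rw [← Finset.mul_sum]
      apply mul_le_mul_of_nonneg_left _ (by norm_num)
      rw [Finset.sum_filter]
      exact Finset.sum_le_sum (fun i _ => phiT_le_ite ht₀ _)
    calc (n : ℝ)⁻¹ * ∑ i ∈ univ.filter
          (fun i : Fin n => max (2 * t₀) M < |Real.log (a n i)|), |Real.log (a n i)|
        ≤ (n : ℝ)⁻¹ * (2 * ∑ i ∈ univ.filter (fun i : Fin n => t₀ < |Real.log (b n i)|),
            |Real.log (b n i)|) := by
          apply mul_le_mul_of_nonneg_left _ (by positivity)
          linarith
      _ = 2 * ((n : ℝ)⁻¹ * ∑ i ∈ univ.filter (fun i : Fin n => t₀ < |Real.log (b n i)|),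
            |Real.log (b n i)|) := by ring
      _ ≤ 2 * (ε / 2) := by
          apply mul_le_mul_of_nonneg_left (hb n) (by norm_num)
      _ = ε := by ring

/-- weak convergence plus uniform integrability of `log` gives convergence of log-means. -/
lemma conv_log (d : ℕ → ℕ) (c : (m : ℕ) → Fin (d m) → ℝ) (hc : ∀ m i, 0 < c m i)
    (ν : Measure ℝ) [IsProbabilityMeasure ν]
    (hW : ∀ f : BoundedContinuousFunction ℝ ℝ,
      Tendsto (fun m : ℕ => ((d m : ℝ))⁻¹ * ∑ i : Fin (d m), f (c m i)) atTop
        (nhds (∫ x, f x ∂ν)))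
    (hU : ∀ ε : ℝ, 0 < ε → ∃ t : ℝ, 0 ≤ t ∧ ∀ m : ℕ,
      ((d m : ℝ))⁻¹ * ∑ i ∈ univ.filter (fun i : Fin (d m) => t < |Real.log (c m i)|),
        |Real.log (c m i)| ≤ ε) :
    Tendsto (fun m : ℕ => ((d m : ℝ))⁻¹ * ∑ i : Fin (d m), Real.log (c m i)) atTop
      (nhds (∫ x, Real.log x ∂ν)) := by
  -- a.e. nonvanishing and integrability of log
  obtain ⟨t₁, ht₁, h1⟩ := hU 1 one_pos
  obtain ⟨h0, hlint1⟩ := lint_phiT_le d c hc ν hW ht₁ zero_le_one h1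
  have hae : ∀ᵐ x ∂ν, x ≠ 0 := by
    have hset : {x : ℝ | ¬ x ≠ 0} = {0} := by ext x; simp
    rw [ae_iff, hset]; exact h0
  have hintlog : Integrable Real.log ν := by
    refine ⟨Real.measurable_log.aestronglyMeasurable, ?_⟩
    rw [hasFiniteIntegral_iff_norm]
    calc ∫⁻ x, ENNReal.ofReal ‖Real.log x‖ ∂ν
        ≤ ∫⁻ x, (ENNReal.ofReal (phiT t₁ (Real.log x)) + ENNReal.ofReal t₁) ∂ν := by
          apply lintegral_mono
          intro x
          dsimp only
          rw [Real.norm_eq_abs]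
          refine le_trans (ENNReal.ofReal_le_ofReal ?_) (ENNReal.ofReal_add_le)
          linarith [abs_sub_le_phiT t₁ (Real.log x)]
      _ = (∫⁻ x, ENNReal.ofReal (phiT t₁ (Real.log x)) ∂ν) + ENNReal.ofReal t₁ := by
          rw [lintegral_add_right _ measurable_const, lintegral_const, measure_univ, mul_one]
      _ < ⊤ := ENNReal.add_lt_top.2 ⟨lt_of_le_of_lt hlint1 ENNReal.ofReal_lt_top,
          ENNReal.ofReal_lt_top⟩
  rw [Metric.tendsto_atTop]
  intro ε hε
  obtain ⟨t, ht0, hUt⟩ := hU (ε/4) (by linarith)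
  set g : BoundedContinuousFunction ℝ ℝ := BoundedContinuousFunction.ofNormedAddCommGroup
    (glog t) (glog_continuous t) t (glog_bound ht0) with hg
  have hgcoe : ∀ x, g x = glog t x := fun x => rfl
  obtain ⟨-, hlphi⟩ := lint_phiT_le d c hc ν hW ht0 (by linarith) hUt
  have hphi_meas : Measurable fun x => phiT t (Real.log x) :=
    (phiT_continuous t).measurable.comp Real.measurable_log
  have hphiν : ∫ x, phiT t (Real.log x) ∂ν ≤ ε/4 := by
    rw [integral_eq_lintegral_of_nonneg_ae (ae_of_all _ fun x => phiT_nonneg _ _)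
      hphi_meas.aestronglyMeasurable]
    calc (∫⁻ x, ENNReal.ofReal (phiT t (Real.log x)) ∂ν).toReal
        ≤ (ENNReal.ofReal (ε/4)).toReal := ENNReal.toReal_mono ENNReal.ofReal_ne_top hlphi
      _ = ε/4 := ENNReal.toReal_ofReal (by linarith)
  have hphi_integrable : Integrable (fun x => phiT t (Real.log x)) ν := by
    refine ⟨hphi_meas.aestronglyMeasurable, ?_⟩
    rw [hasFiniteIntegral_iff_norm]
    have : ∀ x : ℝ, ENNReal.ofReal ‖phiT t (Real.log x)‖
        = ENNReal.ofReal (phiT t (Real.log x)) := by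
      intro x; rw [Real.norm_eq_abs, abs_of_nonneg (phiT_nonneg _ _)]
    simp_rw [this]
    exact lt_of_le_of_lt hlphi ENNReal.ofReal_lt_top
  have hg_int : Integrable (⇑g) ν := g.integrable ν
  have hdiff : |∫ x, Real.log x ∂ν - ∫ x, g x ∂ν| ≤ ε/4 := by
    rw [← integral_sub hintlog hg_int]
    have habs : |∫ x, (Real.log x - g x) ∂ν| ≤ ∫ x, |Real.log x - g x| ∂ν := by
      simpa [Real.norm_eq_abs] using
        norm_integral_le_integral_norm (μ := ν) (fun x => Real.log x - g x)
    refine le_trans habs (le_trans (integral_mono_ae ((hintlog.sub hg_int).abs)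
      hphi_integrable ?_) hphiν)
    filter_upwards [hae] with x hx
    rw [hgcoe]
    exact glog_diff ht0 hx
  have hsum : ∀ m : ℕ, |((d m : ℝ))⁻¹ * ∑ i : Fin (d m), Real.log (c m i)
      - ((d m : ℝ))⁻¹ * ∑ i : Fin (d m), g (c m i)| ≤ ε/4 := by
    intro m
    rw [← mul_sub, ← Finset.sum_sub_distrib, abs_mul, abs_inv, Nat.abs_cast]
    refine le_trans (mul_le_mul_of_nonneg_left ?_ (by positivity)) (hUt m)
    calc |∑ i : Fin (d m), (Real.log (c m i) - g (c m i))|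
        ≤ ∑ i : Fin (d m), |Real.log (c m i) - g (c m i)| := Finset.abs_sum_le_sum_abs _ _
      _ ≤ ∑ i ∈ univ.filter (fun i : Fin (d m) => t < |Real.log (c m i)|),
            |Real.log (c m i)| := by
          rw [Finset.sum_filter]
          refine Finset.sum_le_sum fun i _ => ?_
          rw [hgcoe]
          exact le_trans (glog_diff ht0 (hc m i).ne') (phiT_le_ite ht0 _)
  obtain ⟨N, hN⟩ := (Metric.tendsto_atTop.1 (hW g)) (ε/4) (by linarith)
  refine ⟨N, fun m hm => ?_⟩
  have h2 := hN m hm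
  rw [Real.dist_eq] at h2 ⊢
  have h3 := hsum m
  calc |((d m : ℝ))⁻¹ * ∑ i : Fin (d m), Real.log (c m i) - ∫ x, Real.log x ∂ν|
      ≤ |((d m : ℝ))⁻¹ * ∑ i : Fin (d m), Real.log (c m i)
          - ((d m : ℝ))⁻¹ * ∑ i : Fin (d m), g (c m i)|
        + |((d m : ℝ))⁻¹ * ∑ i : Fin (d m), g (c m i) - ∫ x, g x ∂ν|
        + |∫ x, g x ∂ν - ∫ x, Real.log x ∂ν| := by
          have := abs_sub_le (((d m : ℝ))⁻¹ * ∑ i : Fin (d m), Real.log (c m i))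
            (((d m : ℝ))⁻¹ * ∑ i : Fin (d m), g (c m i)) (∫ x, Real.log x ∂ν)
          have := abs_sub_le (((d m : ℝ))⁻¹ * ∑ i : Fin (d m), g (c m i))
            (∫ x, g x ∂ν) (∫ x, Real.log x ∂ν)
          linarith
    _ < ε := by
        rw [abs_sub_comm (∫ x, g x ∂ν)] at *
        have h4 : |∫ x, g x ∂ν - ∫ x, Real.log x ∂ν| ≤ ε / 4 := by
          rw [abs_sub_comm]; exact hdiff
        linarith

end Aux

/-- Logarithmic majorization and uniform integrability (lemma of Tao and Vu, revisited):
for two triangular arrays of positive reals `a` and `b` such that, for `n` large enough,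
both rows are non-increasing, the partial products of `a` are log-majorized by those of
`b` (from above and from below), and such that the empirical measures `ν_n` of `b`
converge weakly to a probability measure `ν` with `log` uniformly integrable for
`(ν_n)`, one gets: `log` is uniformly integrable for the empirical measures `μ_n` of `a`,
the log-means of `a` and `b` coincide for `n` large and converge to `∫ log dν`, and
every weak accumulation point `μ` of `(μ_n)` satisfies `∫ log dμ = ∫ log dν`. -/
theorem log_majorization_uniform_integrability
    (a b : (n : ℕ) → Fin n → ℝ)
    (ha_pos : ∀ n i, 0 < a n i) (hb_pos : ∀ n i, 0 < b n i)
    (h_mono : ∀ᶠ n in atTop, Antitone (a n) ∧ Antitone (b n))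
    (h_maj : ∀ᶠ n in atTop, ∀ k : ℕ,
      ∏ i ∈ Finset.univ.filter (fun i : Fin n => (i : ℕ) < k), a n i ≤
        ∏ i ∈ Finset.univ.filter (fun i : Fin n => (i : ℕ) < k), b n i)
    (h_maj' : ∀ᶠ n in atTop, ∀ k : ℕ,
      ∏ i ∈ Finset.univ.filter (fun i : Fin n => k ≤ (i : ℕ)), b n i ≤
        ∏ i ∈ Finset.univ.filter (fun i : Fin n => k ≤ (i : ℕ)), a n i)
    (ν : Measure ℝ) [IsProbabilityMeasure ν]
    (h_weak : ∀ f : BoundedContinuousFunction ℝ ℝ,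
      Tendsto (fun n : ℕ => (n : ℝ)⁻¹ * ∑ i : Fin n, f (b n i)) atTop
        (nhds (∫ x, f x ∂ν)))
    (h_ui : ∀ ε : ℝ, 0 < ε → ∃ t : ℝ, ∀ n : ℕ,
      (n : ℝ)⁻¹ * ∑ i ∈ Finset.univ.filter
        (fun i : Fin n => t < |Real.log (b n i)|), |Real.log (b n i)| ≤ ε) :
    (∀ ε : ℝ, 0 < ε → ∃ t : ℝ, ∀ n : ℕ,
      (n : ℝ)⁻¹ * ∑ i ∈ Finset.univ.filter
        (fun i : Fin n => t < |Real.log (a n i)|), |Real.log (a n i)| ≤ ε) ∧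
    (∀ᶠ n : ℕ in atTop,
      (n : ℝ)⁻¹ * ∑ i : Fin n, Real.log (a n i) =
        (n : ℝ)⁻¹ * ∑ i : Fin n, Real.log (b n i)) ∧
    Tendsto (fun n : ℕ => (n : ℝ)⁻¹ * ∑ i : Fin n, Real.log (b n i)) atTop
      (nhds (∫ x, Real.log x ∂ν)) ∧
    (∀ μ : Measure ℝ, IsProbabilityMeasure μ →
      (∃ φ : ℕ → ℕ, StrictMono φ ∧ ∀ f : BoundedContinuousFunction ℝ ℝ,
        Tendsto (fun m : ℕ => ((φ m : ℝ))⁻¹ * ∑ i : Fin (φ m), f (a (φ m) i)) atTop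
          (nhds (∫ x, f x ∂μ))) →
      ∫ x, Real.log x ∂μ = ∫ x, Real.log x ∂ν) := by
  have c1 := conclusion_one a b ha_pos hb_pos h_mono h_maj h_maj' h_ui
  have c2 : ∀ᶠ n : ℕ in atTop,
      (n : ℝ)⁻¹ * ∑ i : Fin n, Real.log (a n i) =
        (n : ℝ)⁻¹ * ∑ i : Fin n, Real.log (b n i) := by
    filter_upwards [h_mono, h_maj, h_maj'] with n h1 h2 h3
    have := (row_key n (a n) (b n) (ha_pos n) (hb_pos n) h1.1 h2 h3 0 le_rfl).2
    rw [this]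
  have c3 : Tendsto (fun n : ℕ => (n : ℝ)⁻¹ * ∑ i : Fin n, Real.log (b n i)) atTop
      (nhds (∫ x, Real.log x ∂ν)) :=
    conv_log (fun n => n) b hb_pos ν h_weak (ui_nonneg_thresh b h_ui)
  refine ⟨c1, c2, c3, ?_⟩
  rintro μ hμ ⟨φ, hφ, hconv⟩
  have hUa : ∀ ε : ℝ, 0 < ε → ∃ t : ℝ, 0 ≤ t ∧ ∀ m : ℕ,
      ((φ m : ℝ))⁻¹ * ∑ i ∈ Finset.univ.filter
        (fun i : Fin (φ m) => t < |Real.log (a (φ m) i)|), |Real.log (a (φ m) i)| ≤ ε := by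
    intro ε hε
    obtain ⟨t, ht0, h⟩ := ui_nonneg_thresh a c1 ε hε
    exact ⟨t, ht0, fun m => h (φ m)⟩
  have hA : Tendsto (fun m : ℕ => ((φ m : ℝ))⁻¹ * ∑ i : Fin (φ m), Real.log (a (φ m) i)) atTop
      (nhds (∫ x, Real.log x ∂μ)) :=
    conv_log φ (fun m => a (φ m)) (fun m i => ha_pos (φ m) i) μ hconv hUa
  have hB : Tendsto (fun m : ℕ => ((φ m : ℝ))⁻¹ * ∑ i : Fin (φ m), Real.log (b (φ m) i)) atTop
      (nhds (∫ x, Real.log x ∂ν)) := c3.comp hφ.tendsto_atTop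
  have hB' : Tendsto (fun m : ℕ => ((φ m : ℝ))⁻¹ * ∑ i : Fin (φ m), Real.log (a (φ m) i)) atTop
      (nhds (∫ x, Real.log x ∂ν)) := by
    refine hB.congr' ?_
    filter_upwards [hφ.tendsto_atTop.eventually c2] with m hm
    exact hm.symm
  exact tendsto_nhds_unique hA hB'
end

section
/- Rows and operator norm of the inverse: let A ∈ M_n(ℂ) have rows R_1, …, R_n ∈ ℂ^n, and for each i let R_{−i} := span{R_j : j ≠ i}. Then n^{-1/2} min_{1≤i≤n} dist(R_i, R_{−i}) ≤ s_n(A) ≤ min_{1≤i≤n} dist(R_i, R_{−i}), where s_n(A) = min_{‖x‖₂=1} ‖Ax‖₂ is the smallest singular value of A. -/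
open MeasureTheory

/-- A vector of `ℂ^n` seen in the Euclidean (ℓ²) space. -/
noncomputable def toEuc {n : ℕ} (v : Fin n → ℂ) : EuclideanSpace ℂ (Fin n) :=
  (WithLp.equiv 2 (Fin n → ℂ)).symm v

/-- The smallest singular value of `A ∈ M_n(ℂ)`, characterized as
`s_n(A) = min_{‖x‖₂ = 1} ‖A x‖₂`. -/
noncomputable def sMin {n : ℕ} (A : Matrix (Fin n) (Fin n) ℂ) : ℝ :=
  ⨅ x : {x : EuclideanSpace ℂ (Fin n) // ‖x‖ = 1},
    ‖toEuc (A.mulVec ((WithLp.equiv 2 (Fin n → ℂ)) x.1))‖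

lemma toEuc_apply {n : ℕ} (v : Fin n → ℂ) (k : Fin n) : toEuc v k = v k := rfl

lemma norm_toEuc {n : ℕ} (v : Fin n → ℂ) : ‖toEuc v‖ = Real.sqrt (∑ k, ‖v k‖ ^ 2) := by
  rw [EuclideanSpace.norm_eq]
  rfl

lemma mulVec_conj {n : ℕ} (A : Matrix (Fin n) (Fin n) ℂ) (y : EuclideanSpace ℂ (Fin n))
    (j : Fin n) :
    A.mulVec (fun k => (starRingEnd ℂ) (y k)) j
      = (starRingEnd ℂ) (inner ℂ (toEuc (A j)) y : ℂ) := by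
  simp [Matrix.mulVec, dotProduct, PiLp.inner_apply, RCLike.inner_apply, map_sum,
    toEuc_apply, mul_comm]

lemma norm_toEuc_conj {n : ℕ} (y : EuclideanSpace ℂ (Fin n)) :
    ‖toEuc (fun k => (starRingEnd ℂ) (y k))‖ = ‖y‖ := by
  rw [norm_toEuc, EuclideanSpace.norm_eq]
  simp

lemma sMin_nonneg {n : ℕ} (A : Matrix (Fin n) (Fin n) ℂ) : 0 ≤ sMin A :=
  Real.iInf_nonneg fun _ => norm_nonneg _

lemma sMin_le {n : ℕ} (A : Matrix (Fin n) (Fin n) ℂ) (z : Fin n → ℂ) (hz : ‖toEuc z‖ = 1) :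
    sMin A ≤ ‖toEuc (A.mulVec z)‖ := by
  have := ciInf_le (f := fun x : {x : EuclideanSpace ℂ (Fin n) // ‖x‖ = 1} =>
      ‖toEuc (A.mulVec ((WithLp.equiv 2 (Fin n → ℂ)) x.1))‖)
    ⟨0, fun r ⟨x, hx⟩ => hx ▸ norm_nonneg _⟩ ⟨toEuc z, hz⟩
  simpa [toEuc, sMin] using this

lemma upper {n : ℕ} (hn : 0 < n) (A : Matrix (Fin n) (Fin n) ℂ) (i : Fin n) :
    sMin A ≤ Metric.infDist (toEuc (A i))
      ↑(Submodule.span ℂ ((fun j => toEuc (A j)) '' {j | j ≠ i})) := by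
  classical
  set W := Submodule.span ℂ ((fun j => toEuc (A j)) '' {j | j ≠ i}) with hW
  have hset : ((fun j => toEuc (A j)) '' {j | j ≠ i})
      = ↑(Finset.image (fun j => toEuc (A j)) ({i}ᶜ : Finset (Fin n))) := by
    rw [Finset.coe_image]
    ext j; simp
  have hfr : Module.finrank ℂ W < n := by
    calc Module.finrank ℂ W ≤ (Finset.image (fun j => toEuc (A j)) ({i}ᶜ : Finset (Fin n))).card := by
          rw [hW, hset]; exact finrank_span_finset_le_card _
      _ ≤ ({i}ᶜ : Finset (Fin n)).card := Finset.card_image_le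
      _ = n - 1 := by simp [Finset.card_compl]
      _ < n := by omega
  have hbot : Wᗮ ≠ ⊥ := by
    intro h
    have h2 := Submodule.finrank_add_finrank_orthogonal W
    rw [h, finrank_bot, finrank_euclideanSpace_fin] at h2
    omega
  obtain ⟨y, hyW, hy0⟩ := Submodule.exists_mem_ne_zero_of_ne_bot hbot
  set u : EuclideanSpace ℂ (Fin n) := ‖y‖⁻¹ • y with hu
  have hun : ‖u‖ = 1 := norm_smul_inv_norm hy0
  have huW : u ∈ Wᗮ := Submodule.smul_of_tower_mem _ _ hyW
  have hiz : ∀ j, j ≠ i → inner ℂ (toEuc (A j)) u = (0:ℂ) := fun j hj =>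
    (Submodule.mem_orthogonal W u).1 huW _ (Submodule.subset_span ⟨j, hj, rfl⟩)
  have h1 : sMin A ≤ ‖toEuc (A.mulVec (fun k => (starRingEnd ℂ) (u k)))‖ :=
    sMin_le A _ (by rw [norm_toEuc_conj, hun])
  have h2 : ‖toEuc (A.mulVec (fun k => (starRingEnd ℂ) (u k)))‖
      = ‖(inner ℂ (toEuc (A i)) u : ℂ)‖ := by
    rw [norm_toEuc, Finset.sum_eq_single i]
    · rw [mulVec_conj, Real.sqrt_sq (norm_nonneg _), RCLike.norm_conj]
    · intro j _ hj; rw [mulVec_conj, hiz j hj]; simp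
    · simp
  have h3 : ‖(inner ℂ (toEuc (A i)) u : ℂ)‖ ≤ Metric.infDist (toEuc (A i)) ↑W := by
    rw [Metric.infDist_eq_iInf]
    refine le_ciInf fun w => ?_
    have hz : (inner ℂ (toEuc (A i)) u : ℂ) = inner ℂ (toEuc (A i) - (w:EuclideanSpace ℂ (Fin n))) u := by
      rw [inner_sub_left, (Submodule.mem_orthogonal W u).1 huW w w.2, sub_zero]
    rw [hz, dist_eq_norm]
    calc ‖(inner ℂ (toEuc (A i) - (w:EuclideanSpace ℂ (Fin n))) u : ℂ)‖
        ≤ ‖toEuc (A i) - (w:EuclideanSpace ℂ (Fin n))‖ * ‖u‖ := norm_inner_le_norm _ _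
      _ = _ := by rw [hun, mul_one]
  exact h1.trans (h2.le.trans h3)

lemma lower {n : ℕ} (hn : 0 < n) (A : Matrix (Fin n) (Fin n) ℂ)
    (m : ℝ) (hm : 0 < m)
    (hmd : ∀ i, m ≤ Metric.infDist (toEuc (A i))
      ↑(Submodule.span ℂ ((fun j => toEuc (A j)) '' {j | j ≠ i}))) :
    (Real.sqrt n)⁻¹ * m ≤ sMin A := by
  classical
  set W : Fin n → Submodule ℂ (EuclideanSpace ℂ (Fin n)) :=
    fun i => Submodule.span ℂ ((fun j => toEuc (A j)) '' {j | j ≠ i}) with hWdef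
  set ν : Fin n → EuclideanSpace ℂ (Fin n) :=
    fun i => toEuc (A i) - (Submodule.orthogonalProjection (W i) (toEuc (A i)) : EuclideanSpace ℂ (Fin n))
    with hνdef
  have hνmem : ∀ i, ν i ∈ (W i)ᗮ := fun i => Submodule.sub_starProjection_mem_orthogonal (K := W i) _
  have hνnorm : ∀ i, m ≤ ‖ν i‖ := by
    intro i
    refine (hmd i).trans ?_
    have := Metric.infDist_le_dist_of_mem
      (Submodule.orthogonalProjection (W i) (toEuc (A i))).2 (x := toEuc (A i))
    rwa [dist_eq_norm] at this
  have hνpos : ∀ i, 0 < ‖ν i‖ := fun i => hm.trans_le (hνnorm i)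
  set u : Fin n → Fin n → ℂ :=
    fun i => (((‖ν i‖ : ℂ))^2)⁻¹ • (fun k => (starRingEnd ℂ) (ν i k)) with hudef
  have hAu : ∀ i j, A.mulVec (u i) j = if j = i then 1 else 0 := by
    intro i j
    rw [hudef]
    rw [Matrix.mulVec_smul]
    have hconj := mulVec_conj A (ν i) j
    by_cases hji : j = i
    · subst hji
      have hdecomp : toEuc (A j) = ν j + (Submodule.orthogonalProjection (W j) (toEuc (A j)) : EuclideanSpace ℂ (Fin n)) := by
        rw [hνdef]; rw [sub_add_cancel]
      have : (inner ℂ (toEuc (A j)) (ν j) : ℂ) = (‖ν j‖ : ℂ)^2 := by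
        rw [hdecomp, inner_add_left]
        rw [(Submodule.mem_orthogonal (W j) (ν j)).1 (hνmem j) _
          (Submodule.orthogonalProjection (W j) (toEuc (A j))).2]
        rw [inner_self_eq_norm_sq_to_K, add_zero]; rfl
      simp only [Pi.smul_apply, hconj, this, smul_eq_mul, if_pos rfl]
      rw [← Complex.ofReal_pow, Complex.conj_ofReal, Complex.ofReal_pow]
      rw [inv_mul_cancel₀ (pow_ne_zero 2 (by exact_mod_cast Complex.ofReal_ne_zero.mpr (hνpos j).ne'))]
      simp
    · have hz : (inner ℂ (toEuc (A j)) (ν i) : ℂ) = 0 :=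
        (Submodule.mem_orthogonal (W i) (ν i)).1 (hνmem i) _
          (Submodule.subset_span ⟨j, hji, rfl⟩)
      simp only [Pi.smul_apply, hconj, hz, map_zero, smul_eq_mul, mul_zero, if_neg hji]
  have hnu : ∀ i, ‖toEuc (u i)‖ ≤ m⁻¹ := by
    intro i
    have heq : toEuc (u i) = (((‖ν i‖ : ℂ))^2)⁻¹ • toEuc (fun k => (starRingEnd ℂ) (ν i k)) := rfl
    rw [heq, norm_smul, norm_toEuc_conj]
    have : ‖(((‖ν i‖ : ℂ))^2)⁻¹‖ = (‖ν i‖^2)⁻¹ := by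
      rw [norm_inv, norm_pow, Complex.norm_real, norm_norm]
    rw [this]
    rw [pow_two, mul_inv, mul_assoc, inv_mul_cancel₀ (hνpos i).ne', mul_one]
    exact inv_anti₀ hm (hνnorm i)
  set B : Matrix (Fin n) (Fin n) ℂ := Matrix.of (fun k i => u i k) with hBdef
  have hAB : A * B = 1 := by
    ext j i
    rw [Matrix.mul_apply, Matrix.one_apply]
    exact (hAu i j)
  have hBA : B * A = 1 := mul_eq_one_comm.mp hAB
  haveI : Nonempty {x : EuclideanSpace ℂ (Fin n) // ‖x‖ = 1} :=
    ⟨⟨EuclideanSpace.single ⟨0, hn⟩ 1, by simp [EuclideanSpace.norm_single]⟩⟩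
  refine le_ciInf fun p => ?_
  obtain ⟨x, hx⟩ := p
  set xf : Fin n → ℂ := (WithLp.equiv 2 (Fin n → ℂ)) x with hxf
  set b : Fin n → ℂ := A.mulVec xf with hb
  have hxb : xf = B.mulVec b := by
    rw [hb, Matrix.mulVec_mulVec, hBA, Matrix.one_mulVec]
  have hsum : B.mulVec b = ∑ i, b i • u i := by
    funext k
    rw [Finset.sum_apply]
    simp only [Matrix.mulVec, dotProduct, Matrix.of_apply, Pi.smul_apply, smul_eq_mul,
      hBdef]
    exact Finset.sum_congr rfl fun i _ => mul_comm _ _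
  set L := (WithLp.linearEquiv 2 ℂ (Fin n → ℂ)).symm with hL
  have htoEucL : ∀ v : Fin n → ℂ, toEuc v = L v := fun _ => rfl
  have hCS : ∑ i, ‖b i‖ ≤ Real.sqrt n * ‖toEuc b‖ := by
    have h1 : (∑ i, ‖b i‖)^2 ≤ (n : ℝ) * ∑ i, ‖b i‖^2 := by
      have := sq_sum_le_card_mul_sum_sq (s := (Finset.univ : Finset (Fin n)))
        (f := fun i => ‖b i‖)
      simpa using this
    calc ∑ i, ‖b i‖ = Real.sqrt ((∑ i, ‖b i‖)^2) :=
          (Real.sqrt_sq (Finset.sum_nonneg fun _ _ => norm_nonneg _)).symm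
      _ ≤ Real.sqrt ((n : ℝ) * ∑ i, ‖b i‖^2) := Real.sqrt_le_sqrt h1
      _ = Real.sqrt n * Real.sqrt (∑ i, ‖b i‖^2) := Real.sqrt_mul (Nat.cast_nonneg n) _
      _ = Real.sqrt n * ‖toEuc b‖ := by rw [norm_toEuc]
  have hmain : (1:ℝ) ≤ m⁻¹ * (Real.sqrt n * ‖toEuc b‖) := by
    calc (1:ℝ) = ‖x‖ := hx.symm
      _ = ‖toEuc xf‖ := rfl
      _ = ‖L (∑ i, b i • u i)‖ := by rw [hxb, hsum, htoEucL]
      _ = ‖∑ i, b i • L (u i)‖ := by rw [map_sum]; simp only [_root_.map_smul]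
      _ ≤ ∑ i, ‖b i • L (u i)‖ := norm_sum_le _ _
      _ = ∑ i, ‖b i‖ * ‖toEuc (u i)‖ := by
          simp only [norm_smul, htoEucL]
      _ ≤ ∑ i, ‖b i‖ * m⁻¹ := Finset.sum_le_sum fun i _ =>
          mul_le_mul_of_nonneg_left (hnu i) (norm_nonneg _)
      _ = m⁻¹ * ∑ i, ‖b i‖ := by rw [← Finset.sum_mul, mul_comm]
      _ ≤ m⁻¹ * (Real.sqrt n * ‖toEuc b‖) :=
          mul_le_mul_of_nonneg_left hCS (inv_nonneg.mpr hm.le)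
  have hs : (0:ℝ) < Real.sqrt n := Real.sqrt_pos.mpr (by exact_mod_cast hn)
  have hm' : m ≤ Real.sqrt n * ‖toEuc b‖ := by
    have := mul_le_mul_of_nonneg_left hmain hm.le
    rwa [mul_one, ← mul_assoc, mul_inv_cancel₀ hm.ne', one_mul] at this
  calc (Real.sqrt n)⁻¹ * m ≤ (Real.sqrt n)⁻¹ * (Real.sqrt n * ‖toEuc b‖) :=
        mul_le_mul_of_nonneg_left hm' (inv_nonneg.mpr hs.le)
    _ = ‖toEuc b‖ := by rw [← mul_assoc, inv_mul_cancel₀ hs.ne', one_mul]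

/-- Rows and operator norm of the inverse: for `A ∈ M_n(ℂ)` with rows `R_1, …, R_n` and
`R_{-i} = span{R_j : j ≠ i}`, one has
`n^{-1/2} min_i dist(R_i, R_{-i}) ≤ s_n(A) ≤ min_i dist(R_i, R_{-i})`,
where `s_n(A) = min_{‖x‖₂=1} ‖Ax‖₂` is the smallest singular value of `A`. -/
theorem rows_and_operator_norm_of_inverse {n : ℕ} (hn : 0 < n)
    (A : Matrix (Fin n) (Fin n) ℂ) :
    (Real.sqrt n)⁻¹ *
        (⨅ i : Fin n, Metric.infDist (toEuc (A i))
          ↑(Submodule.span ℂ ((fun j => toEuc (A j)) '' {j | j ≠ i}))) ≤ sMin A ∧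
      sMin A ≤
        ⨅ i : Fin n, Metric.infDist (toEuc (A i))
          ↑(Submodule.span ℂ ((fun j => toEuc (A j)) '' {j | j ≠ i})) := by
  constructor
  · by_cases hm : 0 < ⨅ i : Fin n, Metric.infDist (toEuc (A i))
        ↑(Submodule.span ℂ ((fun j => toEuc (A j)) '' {j | j ≠ i}))
    · refine lower hn A _ hm fun i => ?_
      refine ciInf_le ⟨0, fun r hr => ?_⟩ i
      obtain ⟨j, rfl⟩ := hr
      exact Metric.infDist_nonneg
    · push_neg at hm
      exact (mul_nonpos_of_nonneg_of_nonpos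
        (inv_nonneg.mpr (Real.sqrt_nonneg _)) hm).trans (sMin_nonneg A)
  · haveI : Nonempty (Fin n) := ⟨⟨0, hn⟩⟩
    exact le_ciInf fun i => upper hn A i
end

section
/- Invertibility via average distance: fix δ, ρ ∈ (0,1) and n ≥ 2/δ. Let A be a random matrix with values in M_n(ℂ), with columns C_1, …, C_n, and for each k let H_k := span{C_j : j ≠ k}. Then for every t ≥ 0, P( min_{x ∈ Incomp} ‖Ax‖₂ ≤ t ρ / √n ) ≤ (2/(δ n)) ∑_{k=1}^n P( dist(C_k, H_k) ≤ t ). -/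
open MeasureTheory ProbabilityTheory
open scoped Classical
open scoped ENNReal Pointwise

/-- The set of `δn`-sparse vectors of `ℂ^n`. -/
noncomputable def sparseSet (n : ℕ) (δ : ℝ) : Set (EuclideanSpace ℂ (Fin n)) :=
  {x | ((Finset.univ.filter fun i : Fin n => x i ≠ 0).card : ℝ) ≤ δ * n}

/-- The set of incompressible unit vectors of `ℂ^n`: unit vectors at ℓ²-distance greater
than `ρ` from the set of `δn`-sparse vectors. -/
noncomputable def incompSet (n : ℕ) (δ ρ : ℝ) : Set (EuclideanSpace ℂ (Fin n)) :=
  {x | ‖x‖ = 1 ∧ ρ < Metric.infDist x (sparseSet n δ)}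


lemma infDist_coe_add_mem {E : Type*} [NormedAddCommGroup E] [Module ℂ E] (p : Submodule ℂ E)
    (v : E) {h : E} (hh : h ∈ p) : Metric.infDist (v + h) ↑p = Metric.infDist v ↑p := by
  have hiso : Isometry (fun z : E => z + h) := Isometry.of_dist_eq fun a b => dist_add_right a b h
  have himg : (fun z : E => z + h) '' ↑p = ↑p := by
    ext z
    constructor
    · rintro ⟨y, hy, rfl⟩; exact p.add_mem hy hh
    · intro hz; exact ⟨z - h, p.sub_mem hz hh, sub_add_cancel z h⟩
  calc Metric.infDist (v + h) ↑p = Metric.infDist (v + h) ((fun z : E => z + h) '' ↑p) := by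
        rw [himg]
    _ = Metric.infDist v ↑p := Metric.infDist_image hiso

lemma infDist_coe_smul {E : Type*} [NormedAddCommGroup E] [NormedSpace ℂ E] (p : Submodule ℂ E)
    {c : ℂ} (hc : c ≠ 0) (v : E) : Metric.infDist (c • v) ↑p = ‖c‖ * Metric.infDist v ↑p := by
  have himg : c • (↑p : Set E) = ↑p := by
    ext z
    rw [Set.mem_smul_set_iff_inv_smul_mem₀ hc]
    exact ⟨fun hz => by have h2 := p.smul_mem c hz; rwa [smul_inv_smul₀ hc] at h2,
      fun hz => p.smul_mem c⁻¹ hz⟩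
  conv_lhs => rw [← himg]
  rw [infDist_smul₀ hc]

lemma markov_count {Ω : Type*} [MeasureSpace Ω] {n : ℕ} (E : Fin n → Set Ω) {m : ℝ}
    (hm : 0 < m) :
    ℙ {ω | m ≤ ((Finset.univ.filter fun k : Fin n => ω ∈ E k).card : ℝ)} ≤
      (ENNReal.ofReal m)⁻¹ * ∑ k : Fin n, ℙ (E k) := by
  set F : Fin n → Set Ω := fun k => toMeasurable ℙ (E k) with hF
  set N : Ω → ℝ≥0∞ := fun ω => ∑ k : Fin n, (F k).indicator (fun _ => (1 : ℝ≥0∞)) ω with hN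
  have hNcard : ∀ ω, N ω = ((Finset.univ.filter fun k : Fin n => ω ∈ F k).card : ℝ≥0∞) := by
    intro ω
    rw [hN]
    simp only [Set.indicator_apply]
    rw [Finset.card_filter]
    push_cast
    simp
  have hNmeas : Measurable N := by
    apply Finset.measurable_sum
    intro k _
    exact (measurable_const.indicator (measurableSet_toMeasurable _ _))
  have hsub : {ω | m ≤ ((Finset.univ.filter fun k : Fin n => ω ∈ E k).card : ℝ)} ⊆
      {ω | ENNReal.ofReal m ≤ N ω} := by
    intro ω hω
    have hcard : (Finset.univ.filter fun k : Fin n => ω ∈ E k).card ≤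
        (Finset.univ.filter fun k : Fin n => ω ∈ F k).card := by
      apply Finset.card_le_card
      intro k hk
      simp only [Finset.mem_filter] at hk ⊢
      exact ⟨hk.1, subset_toMeasurable ℙ (E k) hk.2⟩
    rw [Set.mem_setOf_eq, hNcard]
    calc ENNReal.ofReal m ≤
        ENNReal.ofReal ((Finset.univ.filter fun k : Fin n => ω ∈ E k).card : ℝ) :=
          ENNReal.ofReal_le_ofReal hω
      _ = ((Finset.univ.filter fun k : Fin n => ω ∈ E k).card : ℝ≥0∞) := by
          rw [ENNReal.ofReal_natCast]
      _ ≤ _ := by exact_mod_cast hcard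
  have hmarkov : ENNReal.ofReal m * ℙ {ω | ENNReal.ofReal m ≤ N ω} ≤ ∫⁻ ω, N ω ∂ℙ :=
    mul_meas_ge_le_lintegral₀ hNmeas.aemeasurable _
  have hint : ∫⁻ ω, N ω ∂ℙ = ∑ k : Fin n, ℙ (E k) := by
    rw [hN]
    rw [lintegral_finset_sum]
    · congr 1
      ext k
      rw [lintegral_indicator_const (measurableSet_toMeasurable _ _), one_mul,
        measure_toMeasurable]
    · intro k _
      exact measurable_const.indicator (measurableSet_toMeasurable _ _)
  have h0 : ENNReal.ofReal m ≠ 0 := by simp [hm, hm.not_ge]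
  have htop : ENNReal.ofReal m ≠ ⊤ := ENNReal.ofReal_ne_top
  calc ℙ {ω | m ≤ ((Finset.univ.filter fun k : Fin n => ω ∈ E k).card : ℝ)}
      ≤ ℙ {ω | ENNReal.ofReal m ≤ N ω} := measure_mono hsub
    _ = (ENNReal.ofReal m)⁻¹ * (ENNReal.ofReal m * ℙ {ω | ENNReal.ofReal m ≤ N ω}) := by
        rw [← mul_assoc, ENNReal.inv_mul_cancel h0 htop, one_mul]
    _ ≤ (ENNReal.ofReal m)⁻¹ * ∑ k : Fin n, ℙ (E k) := by
        exact mul_le_mul_right (hmarkov.trans_eq hint) _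

lemma incomp_card {n : ℕ} {δ ρ : ℝ} (hρ : 0 < ρ) (hn : 0 < n)
    {x : EuclideanSpace ℂ (Fin n)} (hx : x ∈ incompSet n δ ρ) :
    δ * n < ((Finset.univ.filter fun k : Fin n => ρ / Real.sqrt n < ‖x k‖).card : ℝ) := by
  by_contra hcon
  push_neg at hcon
  set σ := Finset.univ.filter fun k : Fin n => ρ / Real.sqrt n < ‖x k‖ with hσ
  set y : EuclideanSpace ℂ (Fin n) := WithLp.toLp 2 (fun k => if k ∈ σ then x k else 0) with hy
  have hyS : y ∈ sparseSet n δ := by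
    have hsub : (Finset.univ.filter fun i : Fin n => y i ≠ 0) ⊆ σ := by
      intro i hi
      simp only [Finset.mem_filter, hy] at hi
      by_contra hiσ
      exact hi.2 (if_neg hiσ)
    calc ((Finset.univ.filter fun i : Fin n => y i ≠ 0).card : ℝ) ≤ (σ.card : ℝ) := by
          exact_mod_cast Finset.card_le_card hsub
      _ ≤ δ * n := hcon
  have hnR : (0 : ℝ) < (n : ℝ) := by exact_mod_cast hn
  have hdist : dist x y ≤ ρ := by
    have hnorm : ‖x - y‖ ≤ ρ := by
      rw [EuclideanSpace.norm_eq]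
      have hbound : ∑ i : Fin n, ‖(x - y) i‖ ^ 2 ≤ ρ ^ 2 := by
        have hterm : ∀ i : Fin n, ‖(x - y) i‖ ^ 2 ≤ ρ ^ 2 / n := by
          intro i
          by_cases hi : i ∈ σ
          · have : (x - y) i = 0 := by
              simp [hy, hi, WithLp.equiv, sub_eq_zero]
            rw [this, norm_zero, zero_pow two_ne_zero]
            positivity
          · have hxy : (x - y) i = x i := by simp [hy, hi]
            rw [hxy]
            have hle : ‖x i‖ ≤ ρ / Real.sqrt n := by
              simp only [hσ, Finset.mem_filter, Finset.mem_univ, true_and, not_lt] at hi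
              exact hi
            have h2 : ‖x i‖ ^ 2 ≤ (ρ / Real.sqrt n) ^ 2 := by
              apply sq_le_sq' _ hle
              nlinarith [norm_nonneg (x i)]
            calc ‖x i‖ ^ 2 ≤ (ρ / Real.sqrt n) ^ 2 := h2
              _ = ρ ^ 2 / n := by
                  rw [div_pow, Real.sq_sqrt hnR.le]
        calc ∑ i : Fin n, ‖(x - y) i‖ ^ 2 ≤ ∑ _i : Fin n, ρ ^ 2 / n :=
              Finset.sum_le_sum fun i _ => hterm i
          _ = n * (ρ ^ 2 / n) := by rw [Finset.sum_const]; simp [mul_comm]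
          _ = ρ ^ 2 := by field_simp
      calc Real.sqrt (∑ i : Fin n, ‖(x - y) i‖ ^ 2) ≤ Real.sqrt (ρ ^ 2) :=
            Real.sqrt_le_sqrt hbound
        _ = ρ := Real.sqrt_sq hρ.le
    rw [dist_eq_norm]
    exact hnorm
  have := hx.2
  have hinf : Metric.infDist x (sparseSet n δ) ≤ ρ :=
    le_trans (Metric.infDist_le_dist_of_mem hyS) hdist
  linarith

/-- Invertibility via average distance: for `δ, ρ ∈ (0,1)` and `n ≥ 2/δ`, a random matrix
`A` with columns `C_1, …, C_n` and `H_k = span{C_j : j ≠ k}` satisfies, for every `t ≥ 0`,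
`P(min_{x ∈ Incomp} ‖Ax‖₂ ≤ tρ/√n) ≤ (2/(δn)) ∑_k P(dist(C_k, H_k) ≤ t)`. -/
theorem invertibility_via_average_distance
    {Ω : Type*} [MeasureSpace Ω] [IsProbabilityMeasure (ℙ : Measure Ω)]
    {n : ℕ} (δ ρ : ℝ) (hδ : δ ∈ Set.Ioo (0 : ℝ) 1) (hρ : ρ ∈ Set.Ioo (0 : ℝ) 1)
    (hn : 2 / δ ≤ (n : ℝ))
    (A : Ω → Fin n → Fin n → ℂ) (hA : Measurable A)
    (t : ℝ) (ht : 0 ≤ t) :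
    ℙ {ω | ∃ x ∈ incompSet n δ ρ,
        ‖toEuc ((Matrix.of (A ω)).mulVec ((WithLp.equiv 2 (Fin n → ℂ)) x))‖ ≤
          t * ρ / Real.sqrt n} ≤
      ENNReal.ofReal (2 / (δ * n)) *
        ∑ k : Fin n,
          ℙ {ω | Metric.infDist (toEuc fun i => A ω i k)
              ↑(Submodule.span ℂ ((fun j => toEuc fun i => A ω i j) '' {j | j ≠ k})) ≤ t} := by
  obtain ⟨hδ0, hδ1⟩ := hδ
  obtain ⟨hρ0, hρ1⟩ := hρ
  have hnR : (0 : ℝ) < n := lt_of_lt_of_le (by positivity) hn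
  have hn0 : 0 < n := by exact_mod_cast hnR
  have hsq : (0 : ℝ) < Real.sqrt n := Real.sqrt_pos.2 hnR
  set E : Fin n → Set Ω := fun k => {ω | Metric.infDist (toEuc fun i => A ω i k)
      ↑(Submodule.span ℂ ((fun j => toEuc fun i => A ω i j) '' {j | j ≠ k})) ≤ t} with hE
  have hsub : {ω | ∃ x ∈ incompSet n δ ρ,
        ‖toEuc ((Matrix.of (A ω)).mulVec ((WithLp.equiv 2 (Fin n → ℂ)) x))‖ ≤
          t * ρ / Real.sqrt n} ⊆
      {ω | δ * n ≤ ((Finset.univ.filter fun k : Fin n => ω ∈ E k).card : ℝ)} := by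
    rintro ω ⟨x, hx, hxle⟩
    have key : ∀ k : Fin n, ρ / Real.sqrt n < ‖x k‖ → ω ∈ E k := by
      intro k hk
      set C : Fin n → EuclideanSpace ℂ (Fin n) := fun j => toEuc fun i => A ω i j with hC
      set H := Submodule.span ℂ (C '' {j | j ≠ k}) with hH
      set u : EuclideanSpace ℂ (Fin n) :=
        toEuc ((Matrix.of (A ω)).mulVec ((WithLp.equiv 2 (Fin n → ℂ)) x)) with hu
      have hxk0 : x k ≠ 0 := by
        intro h0
        rw [h0, norm_zero] at hk
        exact absurd hk (not_lt.2 (by positivity))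
      have hdecomp : u = x k • C k + ∑ j ∈ Finset.univ.erase k, x j • C j := by
        have h1 : u = ∑ j : Fin n, x j • C j := by
          ext i
          have hsum : (∑ j : Fin n, x j • C j) i = ∑ j : Fin n, x j * C j i :=
            map_sum (AddMonoidHom.mk' (fun v : EuclideanSpace ℂ (Fin n) => v i)
              (fun a b => rfl)) (fun j => x j • C j) Finset.univ
          rw [hsum]
          show ∑ j : Fin n, A ω i j * x j = ∑ j : Fin n, x j * A ω i j
          exact Finset.sum_congr rfl fun j _ => mul_comm _ _
        rw [h1, ← Finset.add_sum_erase _ _ (Finset.mem_univ k)]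
      have hmem : (∑ j ∈ Finset.univ.erase k, x j • C j) ∈ H := by
        apply Submodule.sum_mem
        intro j hj
        exact H.smul_mem _ (Submodule.subset_span ⟨j, (Finset.mem_erase.1 hj).1, rfl⟩)
      have h1 : Metric.infDist u ↑H = ‖x k‖ * Metric.infDist (C k) ↑H := by
        rw [hdecomp, infDist_coe_add_mem H _ hmem, infDist_coe_smul H hxk0]
      have h2 : Metric.infDist u ↑H ≤ t * ρ / Real.sqrt n := by
        refine le_trans (Metric.infDist_le_dist_of_mem H.zero_mem) ?_
        rw [dist_zero_right]
        exact hxle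
      have h3 : ‖x k‖ * Metric.infDist (C k) ↑H ≤ t * ρ / Real.sqrt n := h1 ▸ h2
      have hd0 : 0 ≤ Metric.infDist (C k) ↑H := Metric.infDist_nonneg
      have hpos : (0 : ℝ) < ρ / Real.sqrt n := by positivity
      show Metric.infDist (C k) ↑H ≤ t
      have h4 : Metric.infDist (C k) ↑H * (ρ / Real.sqrt n) ≤ t * (ρ / Real.sqrt n) := by
        calc Metric.infDist (C k) ↑H * (ρ / Real.sqrt n)
            ≤ Metric.infDist (C k) ↑H * ‖x k‖ := by
              exact mul_le_mul_of_nonneg_left hk.le hd0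
          _ = ‖x k‖ * Metric.infDist (C k) ↑H := mul_comm _ _
          _ ≤ t * ρ / Real.sqrt n := h3
          _ = t * (ρ / Real.sqrt n) := by ring
      exact le_of_mul_le_mul_right h4 hpos
    have hmono : (Finset.univ.filter fun k : Fin n => ρ / Real.sqrt n < ‖x k‖) ⊆
        Finset.univ.filter fun k : Fin n => ω ∈ E k := by
      intro k hkmem
      simp only [Finset.mem_filter, Finset.mem_univ, true_and] at hkmem ⊢
      exact key k hkmem
    refine le_trans (le_of_lt (incomp_card hρ0 hn0 hx)) ?_
    exact_mod_cast Finset.card_le_card hmono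
  have hcoef : (ENNReal.ofReal (δ * n))⁻¹ ≤ ENNReal.ofReal (2 / (δ * n)) := by
    have hδn : (0 : ℝ) < δ * n := by positivity
    rw [← ENNReal.ofReal_inv_of_pos hδn]
    apply ENNReal.ofReal_le_ofReal
    rw [div_eq_mul_inv]
    nlinarith [inv_nonneg.2 hδn.le]
  calc ℙ {ω | ∃ x ∈ incompSet n δ ρ,
        ‖toEuc ((Matrix.of (A ω)).mulVec ((WithLp.equiv 2 (Fin n → ℂ)) x))‖ ≤
          t * ρ / Real.sqrt n}
      ≤ ℙ {ω | δ * n ≤ ((Finset.univ.filter fun k : Fin n => ω ∈ E k).card : ℝ)} :=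
        measure_mono hsub
    _ ≤ (ENNReal.ofReal (δ * n))⁻¹ * ∑ k : Fin n, ℙ (E k) := markov_count E (by positivity)
    _ ≤ ENNReal.ofReal (2 / (δ * n)) * ∑ k : Fin n, ℙ (E k) :=
        mul_le_mul_left hcoef _
end
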